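/- arXiv:1210.4829 — 7 statements merged into one kernel-verified Lean document; each statement's English description precedes it below -/
import Mathlib

section
/- For every real number a > 0, the limit as n → ∞ of ((n−1)/π) · ∫₁^∞ ((n(r−1)+1)/r^(n+2)) · exp(−((n(r−1)+1)/rⁿ)·a) dr equals (1 − e^(−a))/(π a) + (1/π) · ∫₀¹ exp(−(s − s·log s)·a) ds. (With a = |x|², the quantity on the left is the expected density 𝔻_{pₙ}(x) of critical values of the Gaussian SU(2) random polynomial pₙ, so this is Theorem 1.1 of the paper.) -/
open MeasureTheory Real Filter Set Topology

noncomputable def UU (n : ℕ) (r : ℝ) : ℝ := ((n:ℝ) * (r - 1) + 1) / r ^ n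

noncomputable def PHI (n : ℕ) (s : ℝ) : ℝ := s ^ (-(1 / ((n:ℝ) - 1)))

noncomputable def GG (a : ℝ) (n : ℕ) (s : ℝ) : ℝ :=
  (1 - (n:ℝ) * (PHI n s - 1) ^ 2) / (PHI n s) ^ 2 * Real.exp (-(UU n (PHI n s)) * a)

lemma UU_hasDerivAt (m : ℕ) {r : ℝ} (hr : 0 < r) :
    HasDerivAt (UU (m+2)) (-(((m:ℝ)+2) * ((m:ℝ)+1) * (r-1) / r ^ (m+3))) r := by
  have hrn : r ^ (m+2) ≠ 0 := pow_ne_zero _ hr.ne'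
  have h1 : HasDerivAt (fun r : ℝ => (((m+2:ℕ):ℝ) * (r - 1) + 1)) ((m:ℝ)+2) r := by
    have := (((hasDerivAt_id r).sub_const 1).const_mul (((m+2:ℕ):ℝ))).add_const 1
    simpa using this
  have h2 : HasDerivAt (fun r : ℝ => r ^ (m+2)) (((m+2:ℕ):ℝ) * r ^ (m+1)) r := by
    simpa using hasDerivAt_pow (m+2) r
  have := h1.div h2 hrn
  refine this.congr_deriv ?_
  push_cast
  field_simp
  ring

noncomputable def FF (a : ℝ) (m : ℕ) (r : ℝ) : ℝ := Real.exp (-(UU (m+2) r) * a) / a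

noncomputable def FFd (a : ℝ) (m : ℕ) (r : ℝ) : ℝ :=
  ((m:ℝ)+2) * ((m:ℝ)+1) * (r-1) / r ^ (m+3) * Real.exp (-(UU (m+2) r) * a)

lemma FF_hasDerivAt (a : ℝ) (ha : 0 < a) (m : ℕ) {r : ℝ} (hr : 0 < r) :
    HasDerivAt (FF a m) (FFd a m r) r := by
  have hU := UU_hasDerivAt m hr
  have := ((hU.neg.mul_const a).exp).div_const a
  refine this.congr_deriv ?_
  simp only [Pi.neg_apply]
  unfold FFd
  field_simp

set_option maxHeartbeats 1000000 in
lemma UU_tendsto (m : ℕ) : Tendsto (UU (m+2)) atTop (𝓝 0) := by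
  have t1 : Tendsto (fun r : ℝ => (r ^ (m+1))⁻¹) atTop (𝓝 0) :=
    (tendsto_pow_atTop (Nat.succ_ne_zero m)).inv_tendsto_atTop
  have t2 : Tendsto (fun r : ℝ => (r ^ (m+2))⁻¹) atTop (𝓝 0) :=
    (tendsto_pow_atTop (Nat.succ_ne_zero (m+1))).inv_tendsto_atTop
  have h1 : Tendsto (fun r : ℝ => ((m:ℝ)+2) * (r ^ (m+1))⁻¹ - ((m:ℝ)+1) * (r ^ (m+2))⁻¹)
      atTop (𝓝 (((m:ℝ)+2) * 0 - ((m:ℝ)+1) * 0)) :=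
    (t1.const_mul (((m:ℝ)+2))).sub (t2.const_mul (((m:ℝ)+1)))
  rw [show ((m:ℝ)+2) * 0 - ((m:ℝ)+1) * 0 = 0 by ring] at h1
  refine Filter.Tendsto.congr' ?_ h1
  filter_upwards [eventually_gt_atTop (0:ℝ)] with r hr
  unfold UU
  have hrn : r ^ (m+1) ≠ 0 := pow_ne_zero _ hr.ne'
  have hrn2 : r ^ (m+2) ≠ 0 := pow_ne_zero _ hr.ne'
  push_cast
  field_simp
  ring

lemma FF_tendsto (a : ℝ) (ha : 0 < a) (m : ℕ) : Tendsto (FF a m) atTop (𝓝 (1/a)) := by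
  have h0 : Tendsto (fun r => -(UU (m+2) r) * a) atTop (𝓝 ((-(0:ℝ)) * a)) :=
    ((UU_tendsto m).neg).mul_const a
  rw [show (-(0:ℝ)) * a = 0 by ring] at h0
  have h : Tendsto (fun r => Real.exp (-(UU (m+2) r) * a) / a) atTop (𝓝 (Real.exp 0 / a)) :=
    ((Real.continuous_exp.tendsto 0).comp h0).div_const a
  rw [Real.exp_zero] at h
  exact h

lemma FFd_integral (a : ℝ) (ha : 0 < a) (m : ℕ) :
    IntegrableOn (FFd a m) (Ioi 1) ∧
      ∫ r in Ioi (1:ℝ), FFd a m r = 1/a - Real.exp (-a)/a := by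
  have hderiv : ∀ r ∈ Ici (1:ℝ), HasDerivAt (FF a m) (FFd a m r) r := fun r hr =>
    FF_hasDerivAt a ha m (lt_of_lt_of_le one_pos hr)
  have hpos : ∀ r ∈ Ioi (1:ℝ), 0 ≤ FFd a m r := by
    intro r hr
    have hr1 : (1:ℝ) < r := hr
    unfold FFd
    have h0 : (0:ℝ) < r := lt_trans one_pos hr1
    have h1 : (0:ℝ) ≤ r - 1 := by linarith
    have := Real.exp_pos (-(UU (m+2) r) * a)
    have h2 : (0:ℝ) ≤ ((m:ℝ)+2) * ((m:ℝ)+1) * (r-1) / r ^ (m+3) := by positivity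
    positivity
  refine ⟨integrableOn_Ioi_deriv_of_nonneg' hderiv hpos (FF_tendsto a ha m), ?_⟩
  rw [integral_Ioi_of_hasDerivAt_of_nonneg' hderiv hpos (FF_tendsto a ha m)]
  have : FF a m 1 = Real.exp (-a) / a := by
    unfold FF UU
    norm_num
  rw [this]

noncomputable def HH (a : ℝ) (m : ℕ) (r : ℝ) : ℝ :=
  ((m:ℝ)+1) * (1 - ((m:ℝ)+2) * (r-1)^2) / r ^ (m+4) * Real.exp (-(UU (m+2) r) * a)

lemma psi_hasDeriv (m : ℕ) {r : ℝ} (hr : 0 < r) :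
    HasDerivAt (fun r : ℝ => (r ^ (m+1))⁻¹) (-(((m:ℝ)+1) / r ^ (m+2))) r := by
  have := (hasDerivAt_pow (m+1) r).inv (pow_ne_zero _ hr.ne')
  refine this.congr_deriv ?_
  have hrn : r ^ (m+1) ≠ 0 := pow_ne_zero _ hr.ne'
  simp only [Nat.add_sub_cancel]
  push_cast
  field_simp
  ring

lemma psi_image (m : ℕ) : (fun r : ℝ => (r ^ (m+1))⁻¹) '' Ioi 1 = Ioo 0 1 := by
  ext s
  constructor
  · rintro ⟨r, hr, rfl⟩
    have hr1 : (1:ℝ) < r := hr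
    have h1 : (1:ℝ) < r ^ (m+1) := one_lt_pow₀ hr1 (Nat.succ_ne_zero m)
    exact ⟨inv_pos.2 (lt_trans one_pos h1), inv_lt_one_of_one_lt₀ h1⟩
  · rintro ⟨hs0, hs1⟩
    refine ⟨s ^ (-(1/((m:ℝ)+1))), ?_, ?_⟩
    · have : (1:ℝ) < s ^ (-(1/((m:ℝ)+1))) := by
        rw [Real.one_lt_rpow_iff_of_pos hs0]
        right
        constructor
        · exact hs1
        · rw [neg_lt, neg_zero]
          positivity
      exact this
    · have h1 : (s ^ (-(1/((m:ℝ)+1)))) ^ (m+1) = s ^ ((-(1/((m:ℝ)+1))) * ((m+1:ℕ):ℝ)) := by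
        rw [Real.rpow_mul hs0.le, Real.rpow_natCast]
      have h2 : (-(1/((m:ℝ)+1))) * ((m+1:ℕ):ℝ) = -1 := by
        have : ((m:ℝ)+1) ≠ 0 := by positivity
        push_cast
        field_simp
      show ((s ^ (-(1/((m:ℝ)+1)))) ^ (m+1))⁻¹ = s
      rw [h1, h2, Real.rpow_neg_one, inv_inv]

lemma psi_injOn (m : ℕ) : InjOn (fun r : ℝ => (r ^ (m+1))⁻¹) (Ioi 1) := by
  intro x hx y hy h
  have hx1 : (1:ℝ) < x := hx
  have hy1 : (1:ℝ) < y := hy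
  have hx0 : (0:ℝ) < x ^ (m+1) := by positivity
  have h2 : x ^ (m+1) = y ^ (m+1) := by
    have := congrArg (·⁻¹) h
    simpa using this
  have h3 : StrictMonoOn (fun x : ℝ => x ^ (m+1)) (Ici 0) := pow_left_strictMonoOn₀ (Nat.succ_ne_zero m)
  exact h3.injOn (mem_Ici.2 (by linarith : (0:ℝ) ≤ x)) (mem_Ici.2 (by linarith : (0:ℝ) ≤ y)) h2

lemma PHI_psi (m : ℕ) {r : ℝ} (hr : 0 < r) : PHI (m+2) ((r ^ (m+1))⁻¹) = r := by
  unfold PHI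
  have h0 : (r ^ (m+1))⁻¹ = r ^ (-((m+1:ℕ):ℝ)) := by
    rw [Real.rpow_neg hr.le, Real.rpow_natCast]
  have h1 : (((m+2:ℕ):ℝ)) - 1 = (m:ℝ) + 1 := by push_cast; ring
  rw [h0, h1, ← Real.rpow_mul hr.le]
  have h2 : (-((m+1:ℕ):ℝ)) * (-(1/((m:ℝ)+1))) = 1 := by
    have : ((m:ℝ)+1) ≠ 0 := by positivity
    push_cast
    field_simp
  rw [h2, Real.rpow_one]

lemma smul_GG_psi (a : ℝ) (m : ℕ) {r : ℝ} (hr : 1 < r) :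
    |(-(((m:ℝ)+1) / r ^ (m+2)))| • GG a (m+2) ((r ^ (m+1))⁻¹) = HH a m r := by
  have hr0 : (0:ℝ) < r := lt_trans one_pos hr
  rw [smul_eq_mul, abs_neg, abs_of_pos (by positivity : (0:ℝ) < ((m:ℝ)+1) / r ^ (m+2))]
  unfold GG HH
  rw [PHI_psi m hr0]
  push_cast
  have h2 : r ^ (m+2) ≠ 0 := pow_ne_zero _ hr0.ne'
  have h4 : r ^ (m+4) ≠ 0 := pow_ne_zero _ hr0.ne'
  field_simp
  ring

lemma GG_contOn (a : ℝ) (n : ℕ) : ContinuousOn (GG a n) (Ioo 0 1) := by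
  have hφ : ContinuousOn (PHI n) (Ioo 0 1) := by
    apply ContinuousOn.rpow_const continuousOn_id
    intro s hs
    exact Or.inl (ne_of_gt hs.1)
  have hφpos : ∀ s ∈ Ioo (0:ℝ) 1, PHI n s ≠ 0 := fun s hs =>
    (Real.rpow_pos_of_pos hs.1 _).ne'
  have hU : ContinuousOn (fun s => UU n (PHI n s)) (Ioo 0 1) := by
    unfold UU
    apply ContinuousOn.div
    · exact (continuousOn_const.mul (hφ.sub continuousOn_const)).add continuousOn_const
    · exact hφ.pow n
    · intro s hs; exact pow_ne_zero _ (hφpos s hs)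
  unfold GG
  apply ContinuousOn.mul
  · apply ContinuousOn.div
    · exact continuousOn_const.sub
        (continuousOn_const.mul ((hφ.sub continuousOn_const).pow 2))
    · exact hφ.pow 2
    · intro s hs; exact pow_ne_zero _ (hφpos s hs)
  · exact Real.continuous_exp.comp_continuousOn (hU.neg.mul continuousOn_const)

set_option maxHeartbeats 1000000 in
lemma GG_bound (a : ℝ) (ha : 0 < a) (n : ℕ) (hn : 2 ≤ n) {s : ℝ}
    (hs : s ∈ Ioo (0:ℝ) 1) : |GG a n s| ≤ 1 + 2 * (Real.log s)^2 := by
  obtain ⟨hs0, hs1⟩ := hs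
  have hn2 : (2:ℝ) ≤ (n:ℝ) := by exact_mod_cast hn
  set φ := PHI n s with hφdef
  have hφ1 : 1 < φ := by
    rw [hφdef]; unfold PHI
    rw [Real.one_lt_rpow_iff_of_pos hs0]
    exact Or.inr ⟨hs1, by rw [neg_lt, neg_zero]; exact div_pos one_pos (by linarith)⟩
  have hφ0 : (0:ℝ) < φ := lt_trans one_pos hφ1
  have hlogφ : Real.log φ = -Real.log s / ((n:ℝ)-1) := by
    rw [hφdef]; unfold PHI; rw [Real.log_rpow hs0]; ring
  have hkey : (φ - 1)/φ ≤ -Real.log s / ((n:ℝ)-1) := by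
    rw [← hlogφ]
    have h2 := Real.log_le_sub_one_of_pos (show (0:ℝ) < φ⁻¹ by positivity)
    rw [Real.log_inv] at h2
    have h4 : (φ-1)/φ = 1 - φ⁻¹ := by field_simp
    rw [h4]; linarith
  have hq0 : 0 ≤ (φ-1)/φ := div_nonneg (by linarith) hφ0.le
  have hU0 : 0 ≤ UU n φ := by
    unfold UU
    apply div_nonneg
    · nlinarith
    · exact pow_nonneg hφ0.le n
  have hexp1 : Real.exp (-(UU n φ) * a) ≤ 1 := by
    rw [Real.exp_le_one_iff]
    nlinarith
  have e0 : (0:ℝ) < Real.exp (-(UU n φ) * a) := Real.exp_pos _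
  have habs : |GG a n s| = |1 - (n:ℝ)*(φ-1)^2| / φ^2 * Real.exp (-(UU n φ) * a) := by
    unfold GG
    rw [abs_mul, abs_div, abs_of_pos (by positivity : (0:ℝ) < φ^2), abs_of_pos e0]
  have hx0 : (0:ℝ) ≤ (n:ℝ)*(φ-1)^2 := by positivity
  have h5 : |1 - (n:ℝ)*(φ-1)^2| ≤ 1 + (n:ℝ)*(φ-1)^2 := by
    rw [abs_le]; constructor <;> nlinarith
  have h6 : (1 + (n:ℝ)*(φ-1)^2)/φ^2 = 1/φ^2 + (n:ℝ)*((φ-1)/φ)^2 := by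
    field_simp
  have h7 : 1/φ^2 ≤ 1 := by
    rw [div_le_one (by positivity)]
    nlinarith
  have h8 : ((φ-1)/φ)^2 ≤ ((-Real.log s)/((n:ℝ)-1))^2 := pow_le_pow_left₀ hq0 hkey 2
  have hD : (0:ℝ) < ((n:ℝ)-1)^2 := by nlinarith
  have h11 : ((φ-1)/φ)^2 * ((n:ℝ)-1)^2 ≤ (Real.log s)^2 := by
    have h9 : ((-Real.log s)/((n:ℝ)-1))^2 = (Real.log s)^2 / ((n:ℝ)-1)^2 := by
      rw [div_pow]; ring_nf
    rw [← le_div_iff₀ hD]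
    rw [h9] at h8
    exact h8
  have h12 : (n:ℝ) ≤ 2*((n:ℝ)-1)^2 := by nlinarith
  have h10 : (n:ℝ) * ((φ-1)/φ)^2 ≤ 2 * (Real.log s)^2 := by
    have hq2 : (0:ℝ) ≤ ((φ-1)/φ)^2 := sq_nonneg _
    nlinarith [mul_le_mul_of_nonneg_right h12 hq2]
  rw [habs]
  calc |1 - (n:ℝ)*(φ-1)^2| / φ^2 * Real.exp (-(UU n φ) * a)
      ≤ (1 + (n:ℝ)*(φ-1)^2)/φ^2 * 1 := by
        have hd : |1 - (n:ℝ)*(φ-1)^2| / φ^2 ≤ (1 + (n:ℝ)*(φ-1)^2)/φ^2 :=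
          (div_le_div_iff_of_pos_right (by positivity)).2 h5
        exact mul_le_mul hd hexp1 e0.le (by positivity)
    _ = 1/φ^2 + (n:ℝ)*((φ-1)/φ)^2 := by rw [mul_one, h6]
    _ ≤ 1 + 2 * (Real.log s)^2 := by linarith

lemma log_sq_bound {s : ℝ} (hs0 : 0 < s) (hs1 : s < 1) :
    (Real.log s)^2 ≤ 16 * s ^ (-(1/2) : ℝ) := by
  set t := s ^ (-(1/4) : ℝ) with htdef
  have ht1 : 1 < t := by
    rw [htdef, Real.one_lt_rpow_iff_of_pos hs0]
    exact Or.inr ⟨hs1, by norm_num⟩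
  have ht0 : (0:ℝ) < t := lt_trans one_pos ht1
  have hlogt : Real.log t = -(1/4) * Real.log s := by
    rw [htdef, Real.log_rpow hs0]
  have hlt0 : 0 ≤ Real.log t := by
    have := Real.log_neg hs0 hs1
    rw [hlogt]; nlinarith
  have hltt : Real.log t ≤ t := by
    have := Real.log_le_sub_one_of_pos ht0
    linarith
  have ht2 : t^2 = s ^ (-(1/2) : ℝ) := by
    rw [htdef, ← Real.rpow_natCast (s ^ (-(1/4):ℝ)) 2, ← Real.rpow_mul hs0.le]
    norm_num
  have h1 : (Real.log t)^2 ≤ t^2 := pow_le_pow_left₀ hlt0 hltt 2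
  have h2 : (Real.log s)^2 = 16 * (Real.log t)^2 := by
    rw [hlogt]; ring
  rw [h2, ← ht2]
  linarith

lemma bound_integrable : IntegrableOn (fun s : ℝ => 1 + 2 * (Real.log s)^2) (Ioo 0 1) := by
  have h1 : IntegrableOn (fun s : ℝ => s ^ (-(1/2) : ℝ)) (Ioo (0:ℝ) 1) := by
    have := (intervalIntegral.intervalIntegrable_rpow' (r := (-(1/2):ℝ)) (by norm_num)
      : IntervalIntegrable (fun x : ℝ => x ^ (-(1/2):ℝ)) volume 0 1)
    rw [intervalIntegrable_iff_integrableOn_Ioo_of_le (by norm_num : (0:ℝ) ≤ 1)] at this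
    exact this
  have hlog : IntegrableOn (fun s : ℝ => (Real.log s)^2) (Ioo (0:ℝ) 1) := by
    apply Integrable.mono' (h1.const_mul 16)
    · refine ((Real.continuousOn_log.mono ?_).pow 2).aestronglyMeasurable measurableSet_Ioo
      intro s hs
      exact ne_of_gt hs.1
    · rw [ae_restrict_iff' measurableSet_Ioo]
      filter_upwards with s hs
      rw [Real.norm_eq_abs, abs_of_nonneg (sq_nonneg _)]
      exact log_sq_bound hs.1 hs.2
  have hconst : IntegrableOn (fun _ : ℝ => (1:ℝ)) (Ioo (0:ℝ) 1) :=
    integrableOn_const (by simp) (by simp)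
  exact hconst.add (hlog.const_mul 2)

lemma GG_integrableOn (a : ℝ) (ha : 0 < a) (n : ℕ) (hn : 2 ≤ n) :
    IntegrableOn (GG a n) (Ioo 0 1) := by
  apply Integrable.mono' bound_integrable
    ((GG_contOn a n).aestronglyMeasurable measurableSet_Ioo)
  rw [ae_restrict_iff' measurableSet_Ioo]
  filter_upwards with s hs
  rw [Real.norm_eq_abs]
  exact GG_bound a ha n hn hs

set_option maxHeartbeats 1000000 in
lemma key_identity (a : ℝ) (ha : 0 < a) (m : ℕ) :
    ((m:ℝ)+1) * (∫ r in Ioi (1:ℝ),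
        ((((m+2:ℕ):ℝ) * (r - 1) + 1) / r ^ ((m+2) + 2)) *
          Real.exp (-((((m+2:ℕ):ℝ) * (r - 1) + 1) / r ^ (m+2)) * a))
      = (1 - Real.exp (-a))/a + ∫ s in Ioo (0:ℝ) 1, GG a (m+2) s := by
  have hGint := GG_integrableOn a ha (m+2) (by omega)
  have hs : MeasurableSet (Ioi (1:ℝ)) := measurableSet_Ioi
  have hder : ∀ r ∈ Ioi (1:ℝ), HasDerivWithinAt (fun r : ℝ => (r ^ (m+1))⁻¹)
      (-(((m:ℝ)+1) / r ^ (m+2))) (Ioi 1) r := fun r hr =>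
    (psi_hasDeriv m (lt_trans one_pos hr)).hasDerivWithinAt
  have hinj := psi_injOn m
  have himg := psi_image m
  have hcov : ∫ s in Ioo (0:ℝ) 1, GG a (m+2) s
      = ∫ r in Ioi (1:ℝ), |(-(((m:ℝ)+1) / r ^ (m+2)))| • GG a (m+2) ((r ^ (m+1))⁻¹) := by
    rw [← himg]
    exact integral_image_eq_integral_abs_deriv_smul hs hder hinj _
  have hcov2 : ∫ s in Ioo (0:ℝ) 1, GG a (m+2) s = ∫ r in Ioi (1:ℝ), HH a m r := by
    rw [hcov]
    apply setIntegral_congr_fun hs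
    intro r hr
    exact smul_GG_psi a m hr
  have hHint : IntegrableOn (HH a m) (Ioi 1) := by
    have h1 := (integrableOn_image_iff_integrableOn_abs_deriv_smul hs hder hinj (GG a (m+2))).1
      (by rw [himg]; exact hGint)
    exact h1.congr_fun (fun r hr => smul_GG_psi a m hr) hs
  obtain ⟨hFint, hFval⟩ := FFd_integral a ha m
  have hpt : ∀ r ∈ Ioi (1:ℝ),
      ((m:ℝ)+1) * (((((m+2:ℕ):ℝ)) * (r - 1) + 1) / r ^ ((m+2)+2) *
          Real.exp (-((((m+2:ℕ):ℝ) * (r - 1) + 1) / r ^ (m+2)) * a))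
        = FFd a m r + HH a m r := by
    intro r hr
    have hr1 : (1:ℝ) < r := hr
    have hr0 : (0:ℝ) < r := lt_trans one_pos hr1
    unfold FFd HH UU
    have h3 : r ^ (m+3) ≠ 0 := pow_ne_zero _ hr0.ne'
    have h4 : r ^ (m+4) ≠ 0 := pow_ne_zero _ hr0.ne'
    push_cast
    field_simp
    ring
  calc ((m:ℝ)+1) * (∫ r in Ioi (1:ℝ),
        ((((m+2:ℕ):ℝ) * (r - 1) + 1) / r ^ ((m+2) + 2)) *
          Real.exp (-((((m+2:ℕ):ℝ) * (r - 1) + 1) / r ^ (m+2)) * a))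
      = ∫ r in Ioi (1:ℝ), ((m:ℝ)+1) * (((((m+2:ℕ):ℝ)) * (r - 1) + 1) / r ^ ((m+2)+2) *
          Real.exp (-((((m+2:ℕ):ℝ) * (r - 1) + 1) / r ^ (m+2)) * a)) := by
        rw [← integral_const_mul]
    _ = ∫ r in Ioi (1:ℝ), (FFd a m r + HH a m r) := setIntegral_congr_fun hs hpt
    _ = (∫ r in Ioi (1:ℝ), FFd a m r) + ∫ r in Ioi (1:ℝ), HH a m r := integral_add hFint hHint
    _ = (1 - Real.exp (-a))/a + ∫ s in Ioo (0:ℝ) 1, GG a (m+2) s := by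
        rw [hFval, hcov2]
        ring

set_option maxHeartbeats 1000000 in
lemma slope_limit (x : ℝ) :
    Tendsto (fun n : ℕ => ((n:ℝ)-1) * (Real.exp (x / ((n:ℝ)-1)) - 1)) atTop (𝓝 x) := by
  have hd : HasDerivAt (fun t : ℝ => Real.exp (x * t)) x 0 := by
    have := ((hasDerivAt_id (0:ℝ)).const_mul x).exp
    simpa using this
  have hs := hasDerivAt_iff_tendsto_slope.1 hd
  have hinv : Tendsto (fun n : ℕ => ((n:ℝ)-1)⁻¹) atTop (𝓝[≠] (0:ℝ)) := by
    apply tendsto_nhdsWithin_of_tendsto_nhds_of_eventually_within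
    · exact (tendsto_atTop_add_const_right atTop (-1) tendsto_natCast_atTop_atTop).inv_tendsto_atTop
    · filter_upwards [eventually_ge_atTop 2] with n hn
      have h2 : (2:ℝ) ≤ (n:ℝ) := by exact_mod_cast hn
      have h1 : (0:ℝ) < (n:ℝ) - 1 := by linarith
      exact mem_compl_singleton_iff.2 (inv_ne_zero h1.ne')
  have hcomp := hs.comp hinv
  refine Filter.Tendsto.congr' ?_ hcomp
  filter_upwards [eventually_ge_atTop 2] with n hn
  have h2 : (2:ℝ) ≤ (n:ℝ) := by exact_mod_cast hn
  have h1 : (0:ℝ) < (n:ℝ) - 1 := by linarith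
  show slope (fun t : ℝ => Real.exp (x * t)) 0 (((n:ℝ)-1)⁻¹)
      = ((n:ℝ)-1) * (Real.exp (x / ((n:ℝ)-1)) - 1)
  rw [slope_def_field]
  rw [show x * (((n:ℝ)-1)⁻¹) = x / ((n:ℝ)-1) by rw [div_eq_mul_inv]]
  field_simp
  simp only [mul_zero, Real.exp_zero]
  ring

set_option maxHeartbeats 1000000 in
lemma GG_pointwise (a : ℝ) {s : ℝ} (hs : s ∈ Ioo (0:ℝ) 1) :
    Tendsto (fun n : ℕ => GG a n s) atTop
      (𝓝 (Real.exp (-(s - s * Real.log s) * a))) := by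
  obtain ⟨hs0, hs1⟩ := hs
  set x := -Real.log s with hxdef
  have hx0 : 0 < x := by
    rw [hxdef]
    have := Real.log_neg hs0 hs1
    linarith
  have hPHI_eq : ∀ n : ℕ, PHI n s = Real.exp (x / ((n:ℝ)-1)) := by
    intro n
    unfold PHI
    rw [Real.rpow_def_of_pos hs0]
    congr 1
    rw [hxdef]
    ring
  have hinv0 : Tendsto (fun n : ℕ => ((n:ℝ)-1)⁻¹) atTop (𝓝 0) :=
    (tendsto_atTop_add_const_right atTop (-1) tendsto_natCast_atTop_atTop).inv_tendsto_atTop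
  have hc := slope_limit x
  have hφ : Tendsto (fun n : ℕ => PHI n s) atTop (𝓝 1) := by
    have h1 : Tendsto (fun n : ℕ => x * ((n:ℝ)-1)⁻¹) atTop (𝓝 (x * 0)) := hinv0.const_mul x
    rw [mul_zero] at h1
    have h2 := (Real.continuous_exp.tendsto 0).comp h1
    rw [Real.exp_zero] at h2
    refine h2.congr fun n => ?_
    rw [hPHI_eq n]
    show Real.exp (x * ((n:ℝ)-1)⁻¹) = Real.exp (x / ((n:ℝ)-1))
    rw [div_eq_mul_inv]
  have hr1 : Tendsto (fun n : ℕ => (n:ℝ) * (((n:ℝ)-1)⁻¹)) atTop (𝓝 1) := by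
    have h1 : Tendsto (fun n : ℕ => 1 + ((n:ℝ)-1)⁻¹) atTop (𝓝 (1 + 0)) :=
      tendsto_const_nhds.add hinv0
    rw [add_zero] at h1
    refine Filter.Tendsto.congr' ?_ h1
    filter_upwards [eventually_ge_atTop 2] with n hn
    have h2 : (2:ℝ) ≤ (n:ℝ) := by exact_mod_cast hn
    have h3 : ((n:ℝ)-1) ≠ 0 := by intro h; rw [sub_eq_zero] at h; linarith
    field_simp
    ring
  have hφsub : ∀ᶠ n : ℕ in atTop, PHI n s - 1
      = (((n:ℝ)-1)⁻¹) * (((n:ℝ)-1) * (Real.exp (x / ((n:ℝ)-1)) - 1)) := by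
    filter_upwards [eventually_ge_atTop 2] with n hn
    have h2 : (2:ℝ) ≤ (n:ℝ) := by exact_mod_cast hn
    have h3 : ((n:ℝ)-1) ≠ 0 := by intro h; rw [sub_eq_zero] at h; linarith
    rw [hPHI_eq n]
    field_simp
  have hφm1sq : Tendsto (fun n : ℕ => (n:ℝ) * (PHI n s - 1)^2) atTop (𝓝 0) := by
    have h1 : Tendsto (fun n : ℕ =>
        ((n:ℝ) * (((n:ℝ)-1)⁻¹) * ((n:ℝ)-1)⁻¹) *
          ((((n:ℝ)-1) * (Real.exp (x / ((n:ℝ)-1)) - 1))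
            * (((n:ℝ)-1) * (Real.exp (x / ((n:ℝ)-1)) - 1)))) atTop
        (𝓝 ((1 * 0) * (x * x))) := ((hr1.mul hinv0).mul (hc.mul hc))
    rw [show ((1:ℝ) * 0) * (x * x) = 0 by ring] at h1
    refine Filter.Tendsto.congr' ?_ h1
    filter_upwards [hφsub] with n hn
    rw [hn]
    ring
  have hnφ : Tendsto (fun n : ℕ => (n:ℝ) * (PHI n s - 1)) atTop (𝓝 x) := by
    have h1 : Tendsto (fun n : ℕ => ((n:ℝ) * (((n:ℝ)-1)⁻¹)) *
        (((n:ℝ)-1) * (Real.exp (x / ((n:ℝ)-1)) - 1))) atTop (𝓝 (1 * x)) := hr1.mul hc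
    rw [one_mul] at h1
    refine Filter.Tendsto.congr' ?_ h1
    filter_upwards [hφsub] with n hn
    rw [hn]
    ring
  have hφn : Tendsto (fun n : ℕ => (PHI n s)^n) atTop (𝓝 (Real.exp x)) := by
    have h1 : Tendsto (fun n : ℕ => x * ((n:ℝ) * (((n:ℝ)-1)⁻¹))) atTop (𝓝 (x * 1)) :=
      hr1.const_mul x
    rw [mul_one] at h1
    have h2 := (Real.continuous_exp.tendsto x).comp h1
    refine h2.congr fun n => ?_
    show Real.exp (x * ((n:ℝ) * ((n:ℝ)-1)⁻¹)) = (PHI n s)^n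
    rw [hPHI_eq n, ← Real.exp_nat_mul]
    congr 1
    rw [div_eq_mul_inv]
    ring
  have hexpx : Real.exp x = s⁻¹ := by
    rw [hxdef, Real.exp_neg, Real.exp_log hs0]
  have hU : Tendsto (fun n : ℕ => UU n (PHI n s)) atTop (𝓝 ((x+1) * s)) := by
    have h1 : Tendsto (fun n : ℕ => ((n:ℝ) * (PHI n s - 1) + 1) / (PHI n s)^n) atTop
        (𝓝 ((x + 1) / Real.exp x)) :=
      (hnφ.add_const 1).div hφn (Real.exp_ne_zero x)
    rw [hexpx, show ((x+1) / s⁻¹) = (x+1) * s by field_simp] at h1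
    exact h1.congr fun n => rfl
  have hexp : Tendsto (fun n : ℕ => Real.exp (-(UU n (PHI n s)) * a)) atTop
      (𝓝 (Real.exp (-((x+1) * s) * a))) := by
    exact (Real.continuous_exp.tendsto _).comp ((hU.neg).mul_const a)
  have hnum : Tendsto (fun n : ℕ => 1 - (n:ℝ) * (PHI n s - 1)^2) atTop (𝓝 (1 - 0)) :=
    tendsto_const_nhds.sub hφm1sq
  have hden : Tendsto (fun n : ℕ => (PHI n s)^2) atTop (𝓝 (1^2)) := hφ.pow 2
  have hfin := (hnum.div hden (by norm_num)).mul hexp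
  rw [show ((1:ℝ) - 0)/1^2 = 1 by norm_num, one_mul] at hfin
  have harg : -((x+1) * s) * a = -(s - s * Real.log s) * a := by
    rw [hxdef]; ring
  rw [harg] at hfin
  exact hfin


set_option maxHeartbeats 1000000 in
/-- Theorem 1.1: for every `a > 0` (thinking of `a = |x|²`), the expected density
`𝔻_{pₙ} = ((n−1)/π) ∫₁^∞ ((n(r−1)+1)/r^(n+2)) e^{−((n(r−1)+1)/rⁿ) a} dr`
converges, as `n → ∞`, to `(1 − e^{−a})/(π a) + (1/π) ∫₀¹ e^{−(s − s log s) a} ds`. -/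
theorem su2_critical_values_density_limit (a : ℝ) (ha : 0 < a) :
    Tendsto
      (fun n : ℕ =>
        (((n : ℝ) - 1) / π) *
          ∫ r in Ioi (1 : ℝ),
            (((n : ℝ) * (r - 1) + 1) / r ^ (n + 2)) *
              Real.exp (-(((n : ℝ) * (r - 1) + 1) / r ^ n) * a))
      atTop
      (nhds ((1 - Real.exp (-a)) / (π * a)
        + (1 / π) * ∫ s in (0:ℝ)..1, Real.exp (-(s - s * Real.log s) * a))) := by
  have hIoo : (∫ s in (0:ℝ)..1, Real.exp (-(s - s * Real.log s) * a))
      = ∫ s in Ioo (0:ℝ) 1, Real.exp (-(s - s * Real.log s) * a) := by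
    rw [intervalIntegral.integral_of_le (by norm_num : (0:ℝ) ≤ 1),
      integral_Ioc_eq_integral_Ioo]
  rw [hIoo]
  have hDCT : Tendsto (fun n : ℕ => ∫ s in Ioo (0:ℝ) 1, GG a n s) atTop
      (𝓝 (∫ s in Ioo (0:ℝ) 1, Real.exp (-(s - s * Real.log s) * a))) := by
    apply tendsto_integral_filter_of_dominated_convergence
      (fun s => 1 + 2*(Real.log s)^2)
    · filter_upwards with n
      exact (GG_contOn a n).aestronglyMeasurable measurableSet_Ioo
    · filter_upwards [eventually_ge_atTop 2] with n hn
      rw [ae_restrict_iff' measurableSet_Ioo]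
      filter_upwards with s hs
      rw [Real.norm_eq_abs]
      exact GG_bound a ha n hn hs
    · exact bound_integrable
    · rw [ae_restrict_iff' measurableSet_Ioo]
      filter_upwards with s hs
      exact GG_pointwise a hs
  have hfinal := tendsto_const_nhds (x := (1 - Real.exp (-a)) / (π * a))
    (f := atTop (α := ℕ)) |>.add (hDCT.const_mul (1/π))
  refine Filter.Tendsto.congr' ?_ hfinal
  filter_upwards [eventually_ge_atTop 2] with n hn
  obtain ⟨m, rfl⟩ : ∃ m, n = m + 2 := ⟨n - 2, by omega⟩
  have hk := key_identity a ha m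
  have hπ : (π:ℝ) ≠ 0 := Real.pi_ne_zero
  have hcast : ((m+2:ℕ):ℝ) - 1 = (m:ℝ) + 1 := by push_cast; ring
  have hG' : (∫ s in Ioo (0:ℝ) 1, GG a (m+2) s)
      = ((m:ℝ)+1) * (∫ r in Ioi (1:ℝ),
        ((((m+2:ℕ):ℝ) * (r - 1) + 1) / r ^ ((m+2) + 2)) *
          Real.exp (-((((m+2:ℕ):ℝ) * (r - 1) + 1) / r ^ (m+2)) * a))
        - (1 - Real.exp (-a))/a := by
    linarith [hk]
  show (1 - Real.exp (-a)) / (π * a) + (1/π) * ∫ s in Ioo (0:ℝ) 1, GG a (m+2) s = _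
  rw [hG', hcast]
  field_simp
  ring
end

section
/- Let n ≥ 2 be an integer and a ≥ 0 a real number. Then ∫₁^∞ ( (n²−n)·rⁿ·(r−1)²·a + 2·r^(2n) ) / r^(3n+2) · exp(−((n(r−1)+1)/rⁿ)·a) dr = ∫₁^∞ ((n(r−1)+1)/r^(n+2)) · exp(−((n(r−1)+1)/rⁿ)·a) dr. -/
open MeasureTheory Real Set Filter

private lemma su2_hasDerivAt (n : ℕ) (hn : 2 ≤ n) (a : ℝ) (r : ℝ) (hr : 1 ≤ r) :
    HasDerivAt (fun r : ℝ => (r-1)/r^(n+1) * Real.exp (-(((n : ℝ) * (r - 1) + 1) / r ^ n) * a))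
      (((((n : ℝ) ^ 2 - n) * r ^ n * (r - 1) ^ 2 * a + 2 * r ^ (2 * n)) / r ^ (3 * n + 2)) *
          Real.exp (-(((n : ℝ) * (r - 1) + 1) / r ^ n) * a)
       - (((n : ℝ) * (r - 1) + 1) / r ^ (n + 2)) *
          Real.exp (-(((n : ℝ) * (r - 1) + 1) / r ^ n) * a)) r := by
  obtain ⟨m, rfl⟩ : ∃ m, n = m + 2 := ⟨n - 2, by omega⟩
  have hr0 : (0:ℝ) < r := lt_of_lt_of_le one_pos hr
  have hrn : r ^ (m+2) ≠ 0 := pow_ne_zero _ hr0.ne'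
  have h1 : HasDerivAt (fun r : ℝ => ((m+2:ℕ):ℝ)*(r-1)+1) ((m+2:ℕ):ℝ) r := by
    simpa using (((hasDerivAt_id r).sub_const 1).const_mul ((m+2:ℕ):ℝ)).add_const 1
  have hg : HasDerivAt (fun r : ℝ => (((m+2:ℕ):ℝ)*(r-1)+1)/r^(m+2))
      ((((m+2:ℕ):ℝ)*r^(m+2) - (((m+2:ℕ):ℝ)*(r-1)+1)*(((m+2:ℕ):ℝ)*r^(m+1)))/(r^(m+2))^2) r :=
    h1.div (by simpa using hasDerivAt_pow (m+2) r) hrn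
  have hexp := ((hg.neg).mul_const a).exp
  have hu : HasDerivAt (fun r : ℝ => (r-1)/r^(m+2+1))
      ((1*r^(m+2+1) - (r-1)*(((m+3:ℕ):ℝ)*r^(m+2)))/(r^(m+2+1))^2) r :=
    ((hasDerivAt_id r).sub_const 1).div (by simpa using hasDerivAt_pow (m+3) r)
      (pow_ne_zero _ hr0.ne')
  have H := hu.mul hexp
  refine H.congr_deriv ?_
  simp only [Pi.neg_apply]
  push_cast
  field_simp
  ring

/-- The integration-by-parts simplification in the proof of Proposition 3.1:
the two-term integral (ttttt) equals the single-term integral (dpn). -/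
theorem su2_two_term_integral_eq_one_term (n : ℕ) (hn : 2 ≤ n) (a : ℝ) (ha : 0 ≤ a) :
    ∫ r in Ioi (1 : ℝ),
        ((((n : ℝ) ^ 2 - n) * r ^ n * (r - 1) ^ 2 * a + 2 * r ^ (2 * n)) / r ^ (3 * n + 2)) *
          Real.exp (-(((n : ℝ) * (r - 1) + 1) / r ^ n) * a)
    = ∫ r in Ioi (1 : ℝ),
        (((n : ℝ) * (r - 1) + 1) / r ^ (n + 2)) *
          Real.exp (-(((n : ℝ) * (r - 1) + 1) / r ^ n) * a) := by
  have hn1 : (1:ℝ) ≤ (n:ℝ) := by exact_mod_cast Nat.one_le_of_lt hn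
  have hnn : (0:ℝ) ≤ (n:ℝ)^2 - (n:ℝ) := by nlinarith
  set f1 : ℝ → ℝ := fun r =>
    ((((n : ℝ) ^ 2 - n) * r ^ n * (r - 1) ^ 2 * a + 2 * r ^ (2 * n)) / r ^ (3 * n + 2)) *
      Real.exp (-(((n : ℝ) * (r - 1) + 1) / r ^ n) * a) with hf1
  set f2 : ℝ → ℝ := fun r =>
    (((n : ℝ) * (r - 1) + 1) / r ^ (n + 2)) *
      Real.exp (-(((n : ℝ) * (r - 1) + 1) / r ^ n) * a) with hf2
  have hexp_le : ∀ r : ℝ, 1 ≤ r → Real.exp (-(((n : ℝ) * (r - 1) + 1) / r ^ n) * a) ≤ 1 := by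
    intro r hr
    have hr0 : (0:ℝ) < r := lt_of_lt_of_le one_pos hr
    have hgn : 0 ≤ ((n : ℝ) * (r - 1) + 1) / r ^ n := by
      apply div_nonneg (by nlinarith) (by positivity)
    calc Real.exp (-(((n : ℝ) * (r - 1) + 1) / r ^ n) * a)
        ≤ Real.exp 0 := Real.exp_le_exp.2 (by nlinarith)
      _ = 1 := Real.exp_zero
  -- integrability of f1
  have hbase : ∀ c : ℝ, IntegrableOn (fun r : ℝ => c * r ^ (-2:ℝ)) (Ioi 1) :=
    fun c => (integrableOn_Ioi_rpow_of_lt (by norm_num) one_pos).const_mul c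
  have hrpow : ∀ r : ℝ, 0 < r → r ^ (-2:ℝ) = (r^2)⁻¹ := by
    intro r hr0
    rw [← Real.rpow_natCast r 2, ← Real.rpow_neg hr0.le]
    norm_num
  have h1int : IntegrableOn f1 (Ioi 1) := by
    apply Integrable.mono' (hbase (((n:ℝ)^2 - n) * a + 2))
    · apply Measurable.aestronglyMeasurable
      fun_prop
    · rw [ae_restrict_iff' measurableSet_Ioi]
      filter_upwards with r hr
      have hr1 : (1:ℝ) ≤ r := le_of_lt hr
      have hr0 : (0:ℝ) < r := lt_of_lt_of_le one_pos hr1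
      have hnum : 0 ≤ ((n : ℝ) ^ 2 - n) * r ^ n * (r - 1) ^ 2 * a + 2 * r ^ (2 * n) := by
        positivity
      rw [Real.norm_of_nonneg (by positivity), hrpow r hr0]
      calc f1 r ≤ (((n : ℝ) ^ 2 - n) * r ^ n * (r - 1) ^ 2 * a + 2 * r ^ (2 * n)) / r ^ (3 * n + 2) * 1 := by
            apply mul_le_mul_of_nonneg_left (hexp_le r hr1) (by positivity)
        _ ≤ (((n:ℝ)^2 - n) * a + 2) * (r^2)⁻¹ := by
            rw [mul_one, div_le_iff₀ (by positivity)]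
            have e1 : (((n:ℝ)^2 - n) * a + 2) * (r ^ 2)⁻¹ * r ^ (3 * n + 2)
                = (((n:ℝ)^2 - n) * a) * r ^ (3 * n) + 2 * r ^ (3 * n) := by
              field_simp
              ring
            rw [e1]
            have p1 : ((n:ℝ)^2 - n) * r ^ n * (r - 1) ^ 2 * a ≤ (((n:ℝ)^2 - n) * a) * r ^ (3*n) := by
              have : r ^ n * (r-1)^2 ≤ r ^ (3*n) := by
                calc r ^ n * (r-1)^2 ≤ r ^ n * r ^ 2 := by nlinarith [pow_pos hr0 n, sq_nonneg (r-1)]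
                  _ = r ^ (n + 2) := by rw [pow_add]
                  _ ≤ r ^ (3*n) := pow_le_pow_right₀ hr1 (by omega)
              nlinarith [mul_nonneg hnn ha]
            have p2 : 2 * r ^ (2*n) ≤ 2 * r ^ (3*n) := by
              have := pow_le_pow_right₀ hr1 (show 2*n ≤ 3*n by omega)
              linarith
            linarith
  have h2int : IntegrableOn f2 (Ioi 1) := by
    apply Integrable.mono' (hbase (n:ℝ))
    · apply Measurable.aestronglyMeasurable
      fun_prop
    · rw [ae_restrict_iff' measurableSet_Ioi]
      filter_upwards with r hr
      have hr1 : (1:ℝ) ≤ r := le_of_lt hr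
      have hr0 : (0:ℝ) < r := lt_of_lt_of_le one_pos hr1
      have hnum : 0 ≤ (n : ℝ) * (r - 1) + 1 := by nlinarith
      rw [Real.norm_of_nonneg (by positivity), hrpow r hr0]
      calc f2 r ≤ ((n : ℝ) * (r - 1) + 1) / r ^ (n + 2) * 1 := by
            apply mul_le_mul_of_nonneg_left (hexp_le r hr1) (by positivity)
        _ ≤ (n:ℝ) * (r^2)⁻¹ := by
            rw [mul_one, div_le_iff₀ (by positivity)]
            have e1 : (n:ℝ) * (r ^ 2)⁻¹ * r ^ (n+2) = (n:ℝ) * r ^ n := by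
              field_simp
              ring
            rw [e1]
            have hrw : r ≤ r ^ n := by
              simpa using pow_le_pow_right₀ hr1 (show 1 ≤ n by omega)
            nlinarith [mul_le_mul_of_nonneg_left hrw (le_trans zero_le_one hn1)]
  -- FTC
  set F : ℝ → ℝ := fun r =>
    (r-1)/r^(n+1) * Real.exp (-(((n : ℝ) * (r - 1) + 1) / r ^ n) * a) with hF
  have hderiv : ∀ r ∈ Ici (1:ℝ), HasDerivAt F (f1 r - f2 r) r :=
    fun r hr => su2_hasDerivAt n hn a r hr
  have htend : Tendsto F atTop (nhds 0) := by
    apply squeeze_zero' (g := fun r : ℝ => r⁻¹)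
    · filter_upwards [eventually_ge_atTop (1:ℝ)] with r hr
      have hr0 : (0:ℝ) < r := lt_of_lt_of_le one_pos hr
      have : 0 ≤ ((n : ℝ) * (r - 1) + 1) / r ^ n :=
        div_nonneg (by nlinarith) (by positivity)
      simp only [hF]
      exact mul_nonneg (div_nonneg (by linarith) (by positivity)) (Real.exp_nonneg _)
    · filter_upwards [eventually_ge_atTop (1:ℝ)] with r hr
      have hr0 : (0:ℝ) < r := lt_of_lt_of_le one_pos hr
      calc F r ≤ (r-1)/r^(n+1) * 1 :=
            mul_le_mul_of_nonneg_left (hexp_le r hr)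
              (div_nonneg (by linarith) (by positivity))
        _ ≤ r⁻¹ := by
            rw [mul_one, div_le_iff₀ (by positivity), ← one_div, div_mul_eq_mul_div,
              le_div_iff₀ hr0]
            have : r * r ≤ r ^ (n+1) := by
              calc r * r = r ^ 2 := by ring
                _ ≤ r ^ (n+1) := pow_le_pow_right₀ hr (by omega)
            nlinarith
    · exact tendsto_inv_atTop_zero
  have key : ∫ r in Ioi (1:ℝ), (f1 r - f2 r) = 0 - F 1 :=
    integral_Ioi_of_hasDerivAt_of_tendsto' hderiv (h1int.sub h2int) htend
  have hF1 : F 1 = 0 := by simp [hF]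
  rw [integral_sub h1int h2int, hF1, sub_zero] at key
  linarith
end

section
/- Let n ≥ 2 be an integer and a ≥ 0 a real number. Then ∫₁^∞ (n²−n)·(r−1)²·a·r^(−(2n+2)) · exp(−((n(r−1)+1)/rⁿ)·a) dr = ∫₁^∞ ( n·r^(−(n+1)) − (n+1)·r^(−(n+2)) ) · exp(−((n(r−1)+1)/rⁿ)·a) dr. -/
open MeasureTheory Real Set Filter

section Aux

variable (n : ℕ) (a : ℝ)

/-- The exponential factor. -/
noncomputable def su2E (r : ℝ) : ℝ := Real.exp (-(((n : ℝ) * (r - 1) + 1) / r ^ n) * a)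

/-- Left integrand. -/
noncomputable def su2L (r : ℝ) : ℝ :=
  ((n : ℝ) ^ 2 - n) * (r - 1) ^ 2 * a * r ^ (-(2 * (n : ℤ) + 2)) * su2E n a r

/-- Right integrand. -/
noncomputable def su2R (r : ℝ) : ℝ :=
  ((n : ℝ) * r ^ (-((n : ℤ) + 1)) - ((n : ℝ) + 1) * r ^ (-((n : ℤ) + 2))) * su2E n a r

/-- The primitive. -/
noncomputable def su2F (r : ℝ) : ℝ := (r - 1) * r ^ (-(n : ℤ) - 1) * su2E n a r

lemma su2E_pos (r : ℝ) : 0 < su2E n a r := Real.exp_pos _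

lemma su2E_le_one (ha : 0 ≤ a) {r : ℝ} (hr : 1 ≤ r) : su2E n a r ≤ 1 := by
  have hr0 : (0 : ℝ) < r := by linarith
  rw [su2E, Real.exp_le_one_iff]
  have hnum : (0 : ℝ) ≤ (n : ℝ) * (r - 1) + 1 := by
    have : (0 : ℝ) ≤ (n : ℝ) * (r - 1) := mul_nonneg (Nat.cast_nonneg n) (by linarith)
    linarith
  have hden : (0 : ℝ) < r ^ n := pow_pos hr0 n
  have : (0 : ℝ) ≤ ((n : ℝ) * (r - 1) + 1) / r ^ n := div_nonneg hnum hden.le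
  nlinarith

lemma su2_hasDerivAt_s5 (hn : 2 ≤ n) {r : ℝ} (hr : 1 ≤ r) :
    HasDerivAt (su2F n a) (su2L n a r - su2R n a r) r := by
  have hr0 : (0 : ℝ) < r := by linarith
  have hr0' : r ≠ 0 := hr0.ne'
  have hrn : r ^ n ≠ 0 := pow_ne_zero n hr0'
  -- derivative of the polynomial part
  have h1 := ((hasDerivAt_id r).sub_const 1).mul (hasDerivAt_zpow (-(n : ℤ) - 1) r (Or.inl hr0'))
  -- derivative of the exponent
  have h2 : HasDerivAt (fun r : ℝ => ((n : ℝ) * (r - 1) + 1) / r ^ n)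
      (((n : ℝ) * r ^ n - ((n : ℝ) * (r - 1) + 1) * ((n : ℝ) * r ^ (n - 1))) / (r ^ n) ^ 2) r := by
    have hnum : HasDerivAt (fun r : ℝ => (n : ℝ) * (r - 1) + 1) (n : ℝ) r := by
      simpa using (((hasDerivAt_id r).sub_const 1).const_mul (n : ℝ)).add_const 1
    exact hnum.div (hasDerivAt_pow n r) hrn
  have h3 : HasDerivAt (fun r : ℝ => su2E n a r)
      (su2E n a r *
        (-(((n : ℝ) * r ^ n - ((n : ℝ) * (r - 1) + 1) * ((n : ℝ) * r ^ (n - 1))) / (r ^ n) ^ 2)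
          * a)) r := by
    exact ((h2.neg).mul_const a).exp
  have hF := h1.mul h3
  refine HasDerivAt.congr_deriv hF ?_
  simp only [Pi.mul_apply, id, Int.cast_sub, Int.cast_neg, Int.cast_natCast, Int.cast_one]
  have hpow : r ^ (n - 1) = r ^ n / r := by
    rw [eq_div_iff hr0', ← pow_succ, Nat.sub_add_cancel (by omega)]
  -- rewrite all the zpow's as inverses of natural powers
  have e1 : r ^ (-(2 * (n : ℤ) + 2)) = (r ^ (2 * n + 2))⁻¹ := by
    rw [show -(2 * (n : ℤ) + 2) = -((2 * n + 2 : ℕ) : ℤ) by push_cast; ring, zpow_neg,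
      zpow_natCast]
  have e2 : r ^ (-((n : ℤ) + 1)) = (r ^ (n + 1))⁻¹ := by
    rw [show -((n : ℤ) + 1) = -((n + 1 : ℕ) : ℤ) by push_cast; ring, zpow_neg, zpow_natCast]
  have e3 : r ^ (-((n : ℤ) + 2)) = (r ^ (n + 2))⁻¹ := by
    rw [show -((n : ℤ) + 2) = -((n + 2 : ℕ) : ℤ) by push_cast; ring, zpow_neg, zpow_natCast]
  have e4 : r ^ (-(n : ℤ) - 1) = (r ^ (n + 1))⁻¹ := by
    rw [show -(n : ℤ) - 1 = -((n + 1 : ℕ) : ℤ) by push_cast; ring, zpow_neg, zpow_natCast]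
  have e5 : r ^ (-(n : ℤ) - 1 - 1) = (r ^ (n + 2))⁻¹ := by
    rw [show -(n : ℤ) - 1 - 1 = -((n + 2 : ℕ) : ℤ) by push_cast; ring, zpow_neg, zpow_natCast]
  rw [su2L, su2R, e1, e2, e3, e4, e5, hpow]
  field_simp
  ring
end Aux

lemma su2_integrable_zpow {k : ℤ} (hk : (k : ℝ) < -1) :
    IntegrableOn (fun r : ℝ => r ^ k) (Ioi (1 : ℝ)) :=
  (integrableOn_Ioi_rpow_of_lt hk one_pos).congr_fun
    (fun x _ => Real.rpow_intCast x k) measurableSet_Ioi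

lemma su2E_continuousOn (n : ℕ) (a : ℝ) :
    ContinuousOn (su2E n a) {r : ℝ | r ≠ 0} := by
  apply Real.continuous_exp.comp_continuousOn
  apply ContinuousOn.mul _ continuousOn_const
  apply ContinuousOn.neg
  exact ContinuousOn.div (by fun_prop) (by fun_prop) (fun x hx => pow_ne_zero n hx)

lemma su2_ioi_subset : Ioi (1 : ℝ) ⊆ {r : ℝ | r ≠ 0} := fun x hx => by
  have : (1 : ℝ) < x := hx
  simp only [mem_setOf_eq]; linarith

lemma su2L_integrable (n : ℕ) (hn : 2 ≤ n) (a : ℝ) (ha : 0 ≤ a) :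
    IntegrableOn (su2L n a) (Ioi (1 : ℝ)) := by
  have hmeas : AEStronglyMeasurable (su2L n a) (volume.restrict (Ioi (1 : ℝ))) := by
    apply ContinuousOn.aestronglyMeasurable _ measurableSet_Ioi
    apply ContinuousOn.mono _ su2_ioi_subset
    refine ContinuousOn.mul (ContinuousOn.mul (by fun_prop)
      (fun x hx => (continuousAt_zpow₀ x _ (Or.inl hx)).continuousWithinAt))
      (su2E_continuousOn n a)
  have hmaj : IntegrableOn (fun r : ℝ => (n : ℝ) ^ 2 * a * r ^ (-(2 * (n : ℤ)))) (Ioi 1) := by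
    apply Integrable.const_mul
    apply su2_integrable_zpow
    push_cast
    have : (2 : ℝ) ≤ (n : ℝ) := by exact_mod_cast hn
    linarith
  refine MeasureTheory.Integrable.mono hmaj hmeas ?_
  rw [ae_restrict_iff' measurableSet_Ioi]
  filter_upwards with r hr
  have hr1 : (1 : ℝ) < r := hr
  have hr0 : (0 : ℝ) < r := by linarith
  have hzp : (0 : ℝ) < r ^ (-(2 * (n : ℤ) + 2)) := zpow_pos hr0 _
  have hzp2 : (0 : ℝ) < r ^ (-(2 * (n : ℤ))) := zpow_pos hr0 _
  have hnn : (0 : ℝ) ≤ (n : ℝ) ^ 2 - n := by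
    have : (1 : ℝ) ≤ (n : ℝ) := by exact_mod_cast hn.trans' (by norm_num)
    nlinarith
  have hLnn : 0 ≤ su2L n a r := by
    rw [su2L]
    exact mul_nonneg (mul_nonneg (mul_nonneg (mul_nonneg hnn (sq_nonneg _)) ha) hzp.le)
      (su2E_pos n a r).le
  rw [Real.norm_eq_abs, abs_of_nonneg hLnn, Real.norm_eq_abs]
  have hsplit : r ^ (-(2 * (n : ℤ))) = r ^ 2 * r ^ (-(2 * (n : ℤ) + 2)) := by
    rw [← zpow_natCast r 2, ← zpow_add₀ hr0.ne']
    norm_num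
  rw [abs_of_nonneg (by positivity), hsplit, su2L]
  have hE1 : su2E n a r ≤ 1 := su2E_le_one n a ha hr1.le
  have hsq : (r - 1) ^ 2 ≤ r ^ 2 := by nlinarith
  have step1 : ((n : ℝ) ^ 2 - n) * (r - 1) ^ 2 ≤ (n : ℝ) ^ 2 * r ^ 2 :=
    mul_le_mul (by nlinarith [Nat.cast_nonneg (α := ℝ) n]) hsq (sq_nonneg _) (by positivity)
  calc ((n : ℝ) ^ 2 - n) * (r - 1) ^ 2 * a * r ^ (-(2 * (n : ℤ) + 2)) * su2E n a r
      ≤ (n : ℝ) ^ 2 * r ^ 2 * a * r ^ (-(2 * (n : ℤ) + 2)) * 1 :=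
        mul_le_mul (mul_le_mul_of_nonneg_right (mul_le_mul_of_nonneg_right step1 ha) hzp.le)
          hE1 (su2E_pos n a r).le (by positivity)
    _ = (n : ℝ) ^ 2 * a * (r ^ 2 * r ^ (-(2 * (n : ℤ) + 2))) := by ring

lemma su2R_integrable (n : ℕ) (hn : 2 ≤ n) (a : ℝ) (ha : 0 ≤ a) :
    IntegrableOn (su2R n a) (Ioi (1 : ℝ)) := by
  have hmeas : AEStronglyMeasurable (su2R n a) (volume.restrict (Ioi (1 : ℝ))) := by
    apply ContinuousOn.aestronglyMeasurable _ measurableSet_Ioi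
    apply ContinuousOn.mono _ su2_ioi_subset
    apply ContinuousOn.mul _ (su2E_continuousOn n a)
    apply ContinuousOn.sub
    · exact ContinuousOn.mul continuousOn_const
        (fun x hx => (continuousAt_zpow₀ x _ (Or.inl hx)).continuousWithinAt)
    · exact ContinuousOn.mul continuousOn_const
        (fun x hx => (continuousAt_zpow₀ x _ (Or.inl hx)).continuousWithinAt)
  have hmaj : IntegrableOn (fun r : ℝ => (2 * (n : ℝ) + 1) * r ^ (-((n : ℤ) + 1))) (Ioi 1) := by
    apply Integrable.const_mul
    apply su2_integrable_zpow
    push_cast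
    have : (2 : ℝ) ≤ (n : ℝ) := by exact_mod_cast hn
    linarith
  refine MeasureTheory.Integrable.mono hmaj hmeas ?_
  rw [ae_restrict_iff' measurableSet_Ioi]
  filter_upwards with r hr
  have hr1 : (1 : ℝ) < r := hr
  have hr0 : (0 : ℝ) < r := by linarith
  have hE1 : su2E n a r ≤ 1 := su2E_le_one n a ha hr1.le
  have hE0 : 0 < su2E n a r := su2E_pos n a r
  have hz1 : (0 : ℝ) < r ^ (-((n : ℤ) + 1)) := zpow_pos hr0 _
  have hz2 : (0 : ℝ) < r ^ (-((n : ℤ) + 2)) := zpow_pos hr0 _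
  have hle : r ^ (-((n : ℤ) + 2)) ≤ r ^ (-((n : ℤ) + 1)) :=
    zpow_le_zpow_right₀ hr1.le (by omega)
  rw [Real.norm_eq_abs, Real.norm_eq_abs, su2R, abs_mul, abs_of_pos hE0,
    abs_of_nonneg (by positivity : (0:ℝ) ≤ (2 * (n : ℝ) + 1) * r ^ (-((n : ℤ) + 1)))]
  calc |(n : ℝ) * r ^ (-((n : ℤ) + 1)) - ((n : ℝ) + 1) * r ^ (-((n : ℤ) + 2))| * su2E n a r
      ≤ ((n : ℝ) * r ^ (-((n : ℤ) + 1)) + ((n : ℝ) + 1) * r ^ (-((n : ℤ) + 2))) * 1 := by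
        apply mul_le_mul _ hE1 hE0.le (by positivity)
        calc |(n : ℝ) * r ^ (-((n : ℤ) + 1)) - ((n : ℝ) + 1) * r ^ (-((n : ℤ) + 2))|
            ≤ |(n : ℝ) * r ^ (-((n : ℤ) + 1))| + |((n : ℝ) + 1) * r ^ (-((n : ℤ) + 2))| :=
              abs_sub _ _
          _ = (n : ℝ) * r ^ (-((n : ℤ) + 1)) + ((n : ℝ) + 1) * r ^ (-((n : ℤ) + 2)) := by
              rw [abs_of_nonneg (by positivity), abs_of_nonneg (by positivity)]
    _ ≤ (2 * (n : ℝ) + 1) * r ^ (-((n : ℤ) + 1)) := by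
        rw [mul_one]
        nlinarith [Nat.cast_nonneg (α := ℝ) n]

lemma su2F_tendsto (n : ℕ) (hn : 2 ≤ n) (a : ℝ) (ha : 0 ≤ a) :
    Tendsto (su2F n a) atTop (nhds 0) := by
  apply squeeze_zero_norm' (a := fun r : ℝ => r ^ (-(n : ℤ)))
  · filter_upwards [eventually_ge_atTop (1 : ℝ)] with r hr
    have hr0 : (0 : ℝ) < r := by linarith
    have hE1 : su2E n a r ≤ 1 := su2E_le_one n a ha hr
    have hE0 : 0 < su2E n a r := su2E_pos n a r
    have hz : (0 : ℝ) < r ^ (-(n : ℤ) - 1) := zpow_pos hr0 _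
    rw [su2F, Real.norm_eq_abs,
      abs_of_nonneg (mul_nonneg (mul_nonneg (by linarith) hz.le) hE0.le)]
    have hsp : r ^ (-(n : ℤ)) = r ^ (1 : ℤ) * r ^ (-(n : ℤ) - 1) := by
      rw [← zpow_add₀ hr0.ne']
      ring_nf
    rw [hsp, zpow_one]
    calc (r - 1) * r ^ (-(n : ℤ) - 1) * su2E n a r ≤ r * r ^ (-(n : ℤ) - 1) * 1 :=
          mul_le_mul (mul_le_mul_of_nonneg_right (by linarith) hz.le) hE1 hE0.le
            (by positivity)
      _ = r * r ^ (-(n : ℤ) - 1) := mul_one _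
  · exact tendsto_zpow_atTop_zero (by omega)

/-- The integration-by-parts identity for the first part of the integrand in (ttttt):
`∫₁^∞ (n²−n)(r−1)² a r^{−(2n+2)} e^{−((n(r−1)+1)/rⁿ)a} dr
  = ∫₁^∞ (n r^{−(n+1)} − (n+1) r^{−(n+2)}) e^{−((n(r−1)+1)/rⁿ)a} dr`. -/
theorem su2_integration_by_parts_first_term (n : ℕ) (hn : 2 ≤ n) (a : ℝ) (ha : 0 ≤ a) :
    ∫ r in Ioi (1 : ℝ),
        ((n : ℝ) ^ 2 - n) * (r - 1) ^ 2 * a * r ^ (-(2 * (n : ℤ) + 2)) *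
          Real.exp (-(((n : ℝ) * (r - 1) + 1) / r ^ n) * a)
    = ∫ r in Ioi (1 : ℝ),
        ((n : ℝ) * r ^ (-((n : ℤ) + 1)) - ((n : ℝ) + 1) * r ^ (-((n : ℤ) + 2))) *
          Real.exp (-(((n : ℝ) * (r - 1) + 1) / r ^ n) * a) := by
  have hL := su2L_integrable n hn a ha
  have hR := su2R_integrable n hn a ha
  have key : ∫ r in Ioi (1 : ℝ), (su2L n a r - su2R n a r) = 0 - su2F n a 1 := by
    apply integral_Ioi_of_hasDerivAt_of_tendsto'
      (fun x hx => su2_hasDerivAt_s5 n a hn hx.out) (hL.sub hR) (su2F_tendsto n hn a ha)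
  have hF1 : su2F n a 1 = 0 := by simp [su2F]
  rw [integral_sub hL hR, hF1, sub_zero] at key
  have : ∫ r in Ioi (1 : ℝ), su2L n a r = ∫ r in Ioi (1 : ℝ), su2R n a r := by linarith
  simpa [su2L, su2R, su2E] using this
end

section
/- For every real number a ≥ 0, the limit as n → ∞ of ∫₀¹ exp( −(n·t^(n−1) − (n−1)·tⁿ)·a ) dt equals 1. -/
open MeasureTheory Real Filter

lemma yn_nonneg {t : ℝ} (ht0 : 0 ≤ t) (ht1 : t ≤ 1) (n : ℕ) :
    0 ≤ (n : ℝ) * t ^ (n - 1) - ((n : ℝ) - 1) * t ^ n := by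
  rcases Nat.eq_zero_or_pos n with h | h
  · subst h; norm_num
  · have hpow : t ^ n = t ^ (n - 1) * t := by
      rw [← pow_succ, Nat.sub_add_cancel h]
    have hp : 0 ≤ t ^ (n - 1) := pow_nonneg ht0 _
    have h1 : (1 : ℝ) ≤ n := by exact_mod_cast h
    rw [hpow]
    nlinarith [mul_le_mul_of_nonneg_left ht1 (show (0:ℝ) ≤ (n:ℝ) - 1 by linarith),
      mul_nonneg hp (sub_nonneg.mpr h1)]

lemma yn_tendsto {t : ℝ} (ht0 : 0 < t) (ht1 : t < 1) :
    Tendsto (fun n : ℕ => (n : ℝ) * t ^ (n - 1) - ((n : ℝ) - 1) * t ^ n)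
      atTop (nhds 0) := by
  have h1 : Tendsto (fun n : ℕ => (n : ℝ) * t ^ n) atTop (nhds 0) :=
    tendsto_self_mul_const_pow_of_lt_one ht0.le ht1
  have h2 : Tendsto (fun n : ℕ => t ^ n) atTop (nhds 0) :=
    tendsto_pow_atTop_nhds_zero_of_lt_one ht0.le ht1
  have hA' : Tendsto (fun n : ℕ => 1 / t * ((n : ℝ) * t ^ n)) atTop (nhds 0) := by
    simpa using h1.const_mul (1 / t)
  have hA : Tendsto (fun n : ℕ => (n : ℝ) * t ^ (n - 1)) atTop (nhds 0) := by
    refine hA'.congr' ?_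
    filter_upwards [eventually_ge_atTop 1] with n hn
    have hpn : t ^ n = t ^ (n - 1) * t := by
      rw [← pow_succ, Nat.sub_add_cancel hn]
    rw [hpn]
    field_simp
  have hB : Tendsto (fun n : ℕ => ((n : ℝ) - 1) * t ^ n) atTop (nhds 0) := by
    have := h1.sub h2
    simpa [sub_mul] using this
  simpa using hA.sub hB

/-- The key limit in the proof of Theorem 1.1: for `a ≥ 0`,
`gₙ(a) = ∫₀¹ e^{−yₙ(t)a} dt → 1` as `n → ∞`, where `yₙ(t) = n t^(n−1) − (n−1) tⁿ`. -/
theorem su2_g_n_tendsto_one (a : ℝ) (ha : 0 ≤ a) :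
    Tendsto
      (fun n : ℕ =>
        ∫ t in (0:ℝ)..1,
          Real.exp (-((n : ℝ) * t ^ (n - 1) - ((n : ℝ) - 1) * t ^ n) * a))
      atTop (nhds 1) := by
  have key :
      Tendsto
        (fun n : ℕ =>
          ∫ t in (0:ℝ)..1,
            Real.exp (-((n : ℝ) * t ^ (n - 1) - ((n : ℝ) - 1) * t ^ n) * a))
        atTop (nhds (∫ _ in (0:ℝ)..1, (1 : ℝ))) := by
    apply intervalIntegral.tendsto_integral_filter_of_dominated_convergence
      (fun _ => (1 : ℝ))
    · filter_upwards with n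
      apply Continuous.aestronglyMeasurable
      continuity
    · filter_upwards with n
      filter_upwards with t ht
      rw [Set.uIoc_of_le zero_le_one] at ht
      have hy := yn_nonneg ht.1.le ht.2 n
      rw [Real.norm_eq_abs, abs_of_pos (Real.exp_pos _)]
      calc Real.exp (-((n : ℝ) * t ^ (n - 1) - ((n : ℝ) - 1) * t ^ n) * a)
          ≤ Real.exp 0 := by
            apply Real.exp_le_exp.mpr
            nlinarith
        _ = 1 := Real.exp_zero
    · exact intervalIntegrable_const
    · filter_upwards [compl_mem_ae_iff.mpr (measure_singleton (1:ℝ))] with t ht1 ht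
      rw [Set.uIoc_of_le zero_le_one] at ht
      have ht1' : t < 1 := lt_of_le_of_ne ht.2 (by simpa using ht1)
      have h2 : Tendsto
          (fun n : ℕ => -((n : ℝ) * t ^ (n - 1) - ((n : ℝ) - 1) * t ^ n) * a)
          atTop (nhds 0) := by
        simpa [neg_mul] using (yn_tendsto ht.1 ht1').const_mul (-1) |>.mul_const a
      have := (Real.continuous_exp.tendsto 0).comp h2
      simpa [Function.comp_def] using this
  simpa using key
end

section
/- Let n ≥ 1 be an integer. For every s ∈ [0,1], one has −n·s^((n−1)/n) + (n−1)·s ≤ −(n+1)·s^(n/(n+1)) + n·s; that is, the sequence zₙ(s) := −n·s^((n−1)/n) + (n−1)·s is monotone nondecreasing in n for each fixed s ∈ [0,1]. -/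
open Set Real

/-- Monotonicity in `n` of `zₙ(s) = −n s^((n−1)/n) + (n−1)s` for `s ∈ [0,1]`:
`zₙ(s) ≤ z_{n+1}(s)`. -/
theorem su2_z_n_monotone (n : ℕ) (hn : 1 ≤ n) (s : ℝ) (hs : s ∈ Icc (0:ℝ) 1) :
    -(n : ℝ) * s ^ (((n : ℝ) - 1) / n) + ((n : ℝ) - 1) * s
      ≤ -((n : ℝ) + 1) * s ^ ((n : ℝ) / ((n : ℝ) + 1)) + (n : ℝ) * s := by
  obtain ⟨hs0, hs1⟩ := hs
  have hN : (1:ℝ) ≤ (n:ℝ) := by exact_mod_cast hn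
  set N := (n:ℝ) with hNdef
  have hN0 : (0:ℝ) < N := by linarith
  have hN1 : (0:ℝ) < N + 1 := by linarith
  have hw1 : (0:ℝ) ≤ N/(N+1) := by positivity
  have hw2 : (0:ℝ) ≤ 1/(N+1) := by positivity
  have hp1 : (0:ℝ) ≤ s ^ ((N-1)/N) := Real.rpow_nonneg hs0 _
  have hsum : N/(N+1) + 1/(N+1) = 1 := by field_simp
  have key := Real.geom_mean_le_arith_mean2_weighted hw1 hw2 hp1 hs0 hsum
  have hexp : (N-1)/N * (N/(N+1)) + 1/(N+1) = N/(N+1) := by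
    field_simp
    ring
  have hL : (s ^ ((N-1)/N)) ^ (N/(N+1)) * s ^ (1/(N+1)) = s ^ (N/(N+1)) := by
    have hne : (N-1)/N * (N/(N+1)) + 1/(N+1) ≠ 0 := by
      rw [hexp]; positivity
    rw [← Real.rpow_mul hs0, ← Real.rpow_add' hs0 hne, hexp]
  rw [hL] at key
  have key2 : (N+1) * s ^ (N/(N+1)) ≤ N * s ^ ((N-1)/N) + s := by
    have h := mul_le_mul_of_nonneg_left key hN1.le
    calc (N+1) * s ^ (N/(N+1))
        ≤ (N+1) * (N/(N+1) * s ^ ((N-1)/N) + 1/(N+1) * s) := h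
      _ = N * s ^ ((N-1)/N) + s := by field_simp
  linarith
end

section
/- For every real number a ≥ 0, the limit as n → ∞ of ∫₀¹ exp( (−n·s^((n−1)/n) + (n−1)·s)·a ) ds equals ∫₀¹ exp( −(s − s·log s)·a ) ds. Equivalently, with yₙ(t) := n·t^(n−1) − (n−1)·tⁿ, lim_{n→∞} n·∫₀¹ t^(n−1) exp(−yₙ(t)·a) dt = ∫₀¹ exp(−(s − s·log s)·a) ds. -/
open MeasureTheory Real Filter Set

private lemma su2_slope_tendsto (d : ℝ) :
    Tendsto (fun n : ℕ => (Real.exp ((1/(n:ℝ)) * d) - 1) / (1/(n:ℝ))) atTop (nhds d) := by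
  have hf : HasDerivAt (fun x : ℝ => Real.exp (x * d)) d 0 := by
    have h1 : HasDerivAt (fun x : ℝ => x * d) d 0 := hasDerivAt_mul_const d
    simpa using h1.exp
  have hslope := hasDerivAt_iff_tendsto_slope.mp hf
  have h1 : Tendsto (fun n : ℕ => 1/(n:ℝ)) atTop (nhdsWithin (0:ℝ) {x | x ≠ 0}) := by
    apply tendsto_nhdsWithin_of_tendsto_nhds_of_eventually_within _
      tendsto_one_div_atTop_nhds_zero_nat
    filter_upwards [eventually_gt_atTop 0] with n hn
    have : (n:ℝ) ≠ 0 := Nat.cast_ne_zero.mpr hn.ne'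
    simp [this]
  have h2 := hslope.comp h1
  refine h2.congr fun n => ?_
  simp [slope, Function.comp, Real.exp_zero, div_eq_inv_mul]

private lemma su2_inner_tendsto {s : ℝ} (hs : 0 < s) :
    Tendsto (fun n : ℕ => -(n : ℝ) * s ^ (((n : ℝ) - 1) / n) + ((n : ℝ) - 1) * s)
      atTop (nhds (-(s - s * Real.log s))) := by
  have hd := su2_slope_tendsto (-Real.log s)
  have h2 : Tendsto
      (fun n : ℕ => s * (-((Real.exp ((1/(n:ℝ)) * (-Real.log s)) - 1) / (1/(n:ℝ))) - 1))
      atTop (nhds (s * (-(-Real.log s) - 1))) :=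
    tendsto_const_nhds.mul ((hd.neg).sub tendsto_const_nhds)
  have h2' : s * (-(-Real.log s) - 1) = -(s - s * Real.log s) := by ring
  rw [h2'] at h2
  refine Tendsto.congr' ?_ h2
  filter_upwards [eventually_ge_atTop 1] with n hn
  have hn0 : (n : ℝ) ≠ 0 := Nat.cast_ne_zero.mpr (by omega)
  have hse : s * Real.exp ((1/(n:ℝ)) * (-Real.log s)) = s ^ (((n:ℝ)-1)/n) := by
    rw [Real.rpow_def_of_pos hs]
    nth_rewrite 1 [← Real.exp_log hs]
    rw [← Real.exp_add]
    congr 1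
    field_simp
    ring
  have hdiv : (Real.exp ((1/(n:ℝ)) * (-Real.log s)) - 1) / (1/(n:ℝ))
      = (Real.exp ((1/(n:ℝ)) * (-Real.log s)) - 1) * n := by
    rw [div_eq_mul_inv, one_div, inv_inv]
  rw [hdiv, ← hse]
  ring

private lemma su2_subst_eq (a : ℝ) (n : ℕ) (hn : 2 ≤ n) :
    (n : ℝ) * ∫ t in (0:ℝ)..1,
        t ^ (n - 1) * Real.exp (-((n:ℝ) * t ^ (n-1) - ((n:ℝ)-1) * t ^ n) * a)
      = ∫ s in (0:ℝ)..1,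
          Real.exp ((-(n:ℝ) * s ^ (((n:ℝ)-1)/n) + ((n:ℝ)-1) * s) * a) := by
  have hn0 : (n:ℝ) ≠ 0 := Nat.cast_ne_zero.mpr (by omega)
  set p : ℝ := ((n:ℝ)-1)/(n:ℝ) with hp_def
  have hp : 0 ≤ p := by
    apply div_nonneg _ (by positivity)
    have : (1:ℝ) ≤ (n:ℝ) := by exact_mod_cast Nat.one_le_iff_ne_zero.mpr (by omega)
    linarith
  have hg : Continuous fun s : ℝ => Real.exp ((-(n:ℝ) * s ^ p + ((n:ℝ)-1) * s) * a) :=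
    Real.continuous_exp.comp
      ((((continuous_const.mul (Real.continuous_rpow_const hp)).add
        (continuous_const.mul continuous_id)).mul continuous_const))
  have hderiv : ∀ x ∈ uIcc (0:ℝ) 1, HasDerivAt (fun t : ℝ => t ^ n) ((n:ℝ) * x ^ (n-1)) x :=
    fun x _ => hasDerivAt_pow n x
  have hcont : ContinuousOn (fun x : ℝ => (n:ℝ) * x ^ (n-1)) (uIcc (0:ℝ) 1) :=
    (continuous_const.mul (continuous_pow _)).continuousOn
  have sub := intervalIntegral.integral_comp_smul_deriv hderiv hcont hg
  simp only [Function.comp, smul_eq_mul, zero_pow (by omega : n ≠ 0), one_pow] at sub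
  rw [← sub, ← intervalIntegral.integral_const_mul]
  apply intervalIntegral.integral_congr
  intro t ht
  rw [Set.uIcc_of_le (by norm_num : (0:ℝ) ≤ 1)] at ht
  obtain ⟨ht0, _⟩ := ht
  rcases eq_or_lt_of_le ht0 with h0 | h0
  · rw [← h0]
    simp [zero_pow (by omega : n - 1 ≠ 0)]
  · have hpow : ((t ^ n : ℝ)) ^ p = t ^ (n - 1) := by
      rw [← Real.rpow_natCast t n, ← Real.rpow_mul ht0]
      have : (n:ℝ) * p = ((n - 1 : ℕ) : ℝ) := by
        rw [hp_def]
        push_cast [Nat.cast_sub (by omega : 1 ≤ n)]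
        field_simp
      rw [this, Real.rpow_natCast]
    have he : -((n:ℝ) * t ^ (n-1) - ((n:ℝ)-1) * t ^ n) * a
        = (-(n:ℝ) * t ^ (n-1) + ((n:ℝ)-1) * t ^ n) * a := by ring
    simp only [hpow, he]
    ring

private lemma su2_first (a : ℝ) (ha : 0 ≤ a) :
    Tendsto
      (fun n : ℕ =>
        ∫ s in (0:ℝ)..1,
          Real.exp ((-(n : ℝ) * s ^ (((n : ℝ) - 1) / n) + ((n : ℝ) - 1) * s) * a))
      atTop (nhds (∫ s in (0:ℝ)..1, Real.exp (-(s - s * Real.log s) * a))) := by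
  apply intervalIntegral.tendsto_integral_filter_of_dominated_convergence (fun _ => (1:ℝ))
  · filter_upwards with n
    apply ContinuousOn.aestronglyMeasurable _ measurableSet_uIoc
    intro x hx
    rw [Set.uIoc_of_le (by norm_num : (0:ℝ) ≤ 1)] at hx
    have hx0 : x ≠ 0 := ne_of_gt hx.1
    exact ((Real.continuous_exp.continuousAt).comp
      ((((continuousAt_const.mul
        (Real.continuousAt_rpow_const x _ (Or.inl hx0))).add
        (continuousAt_const.mul continuousAt_id)).mul
        continuousAt_const))).continuousWithinAt
  · filter_upwards with n
    filter_upwards with x hx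
    rw [Set.uIoc_of_le (by norm_num : (0:ℝ) ≤ 1)] at hx
    obtain ⟨hx0, hx1⟩ := hx
    rw [Real.norm_eq_abs, abs_of_pos (Real.exp_pos _), Real.exp_le_one_iff]
    have hp1 : ((n:ℝ)-1)/(n:ℝ) ≤ 1 := by
      rcases Nat.eq_zero_or_pos n with rfl | hn
      · simp
      · rw [div_le_one (by exact_mod_cast hn)]
        linarith
    have hxp : x ≤ x ^ (((n:ℝ)-1)/(n:ℝ)) := by
      have := Real.rpow_le_rpow_of_exponent_ge hx0 hx1 hp1
      rwa [Real.rpow_one] at this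
    have hz : -(n : ℝ) * x ^ (((n : ℝ) - 1) / n) + ((n : ℝ) - 1) * x ≤ 0 := by
      have h1 : (n:ℝ) * x ≤ (n:ℝ) * x ^ (((n:ℝ)-1)/(n:ℝ)) :=
        mul_le_mul_of_nonneg_left hxp (by positivity)
      nlinarith
    have := mul_le_mul_of_nonneg_right hz ha
    simpa using this
  · exact intervalIntegrable_const
  · filter_upwards with x hx
    rw [Set.uIoc_of_le (by norm_num : (0:ℝ) ≤ 1)] at hx
    show Tendsto (fun n : ℕ => Real.exp
      ((-(n : ℝ) * x ^ (((n : ℝ) - 1) / n) + ((n : ℝ) - 1) * x) * a)) atTop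
      (nhds (Real.exp (-(x - x * Real.log x) * a)))
    exact Tendsto.comp (g := Real.exp)
      (Real.continuous_exp.tendsto (-(x - x * Real.log x) * a))
      ((su2_inner_tendsto hx.1).mul_const a)

/-- The limit of `hₙ(a)` in the proof of Theorem 1.1: for `a ≥ 0`,
`∫₀¹ e^{zₙ(s)a} ds → ∫₀¹ e^{−(s − s log s)a} ds` where `zₙ(s) = −n s^((n−1)/n) + (n−1)s`;
equivalently, `n ∫₀¹ t^(n−1) e^{−yₙ(t)a} dt → ∫₀¹ e^{−(s − s log s)a} ds`
where `yₙ(t) = n t^(n−1) − (n−1) tⁿ`. -/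
theorem su2_h_n_tendsto (a : ℝ) (ha : 0 ≤ a) :
    Tendsto
      (fun n : ℕ =>
        ∫ s in (0:ℝ)..1,
          Real.exp ((-(n : ℝ) * s ^ (((n : ℝ) - 1) / n) + ((n : ℝ) - 1) * s) * a))
      atTop (nhds (∫ s in (0:ℝ)..1, Real.exp (-(s - s * Real.log s) * a)))
    ∧
    Tendsto
      (fun n : ℕ =>
        (n : ℝ) *
          ∫ t in (0:ℝ)..1,
            t ^ (n - 1) *
              Real.exp (-((n : ℝ) * t ^ (n - 1) - ((n : ℝ) - 1) * t ^ n) * a))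
      atTop (nhds (∫ s in (0:ℝ)..1, Real.exp (-(s - s * Real.log s) * a))) := by
  refine ⟨su2_first a ha, ?_⟩
  refine Tendsto.congr' ?_ (su2_first a ha)
  filter_upwards [eventually_ge_atTop 2] with n hn
  exact (su2_subst_eq a n hn).symm
end

section
/- Let n ≥ 2 be an integer and z, x, ξ ∈ ℂ. Let Δ_z be the 3×3 complex matrix (1+|z|²)ⁿ · M, where M has rows ( 1, n z̄/(1+|z|²), n(n−1) z̄²/(1+|z|²)² ), ( n z/(1+|z|²), (n + n²|z|²)/(1+|z|²)², (2n(n−1)z̄ + (n−1)n² z̄ |z|²)/(1+|z|²)³ ), and ( n(n−1) z²/(1+|z|²)², (2n(n−1)z + (n−1)n² z |z|²)/(1+|z|²)³, (2n(n−1) + 4n(n−1)²|z|² + n²(n−1)²|z|⁴)/(1+|z|²)⁴ ). Then Δ_z is invertible and the scalar (x, 0, ξ) · Δ_z^{-1} · (x̄, 0, ξ̄)ᵀ equals (1/(2(1+|z|²)ⁿ)) · ( | √(n²−n)·z̄²·x + (1/√(n²−n))·(1+|z|²)²·ξ |² + 2(n|z|²+1)·|x|² ). -/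
open Matrix Complex

set_option maxHeartbeats 4000000 in
/-- The diagonalization (vv) of the quadratic form `Q_z(x,ξ) = ⟨(x,0,ξ), Δ_z⁻¹(x̄,0,ξ̄)⟩`:
`Δ_z` is invertible and the quadratic form equals
`(1/(2(1+|z|²)ⁿ)) (|√(n²−n) z̄² x + (1/√(n²−n))(1+|z|²)² ξ|² + 2(n|z|²+1)|x|²)`. -/
theorem su2_covariance_quadratic_form (n : ℕ) (hn : 2 ≤ n) (z x ξ : ℂ) :
    let Δ : Matrix (Fin 3) (Fin 3) ℂ :=
      (((1 + ‖z‖ ^ 2 : ℝ) : ℂ) ^ n) •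
        !![(1 : ℂ),
            (n : ℂ) * (starRingEnd ℂ z) / ((1 : ℂ) + (‖z‖ : ℂ) ^ 2),
            (n : ℂ) * ((n : ℂ) - 1) * (starRingEnd ℂ z) ^ 2
              / ((1 : ℂ) + (‖z‖ : ℂ) ^ 2) ^ 2;
          (n : ℂ) * z / ((1 : ℂ) + (‖z‖ : ℂ) ^ 2),
            ((n : ℂ) + (n : ℂ) ^ 2 * (‖z‖ : ℂ) ^ 2)
              / ((1 : ℂ) + (‖z‖ : ℂ) ^ 2) ^ 2,
            (2 * (n : ℂ) * ((n : ℂ) - 1) * (starRingEnd ℂ z)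
                + ((n : ℂ) - 1) * (n : ℂ) ^ 2 * (starRingEnd ℂ z) * (‖z‖ : ℂ) ^ 2)
              / ((1 : ℂ) + (‖z‖ : ℂ) ^ 2) ^ 3;
          (n : ℂ) * ((n : ℂ) - 1) * z ^ 2 / ((1 : ℂ) + (‖z‖ : ℂ) ^ 2) ^ 2,
            (2 * (n : ℂ) * ((n : ℂ) - 1) * z
                + ((n : ℂ) - 1) * (n : ℂ) ^ 2 * z * (‖z‖ : ℂ) ^ 2)
              / ((1 : ℂ) + (‖z‖ : ℂ) ^ 2) ^ 3,
            (2 * (n : ℂ) * ((n : ℂ) - 1) + 4 * (n : ℂ) * ((n : ℂ) - 1) ^ 2 * (‖z‖ : ℂ) ^ 2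
                + (n : ℂ) ^ 2 * ((n : ℂ) - 1) ^ 2 * (‖z‖ : ℂ) ^ 4)
              / ((1 : ℂ) + (‖z‖ : ℂ) ^ 2) ^ 4]
    IsUnit Δ.det ∧
      (dotProduct ![x, 0, ξ] (Δ⁻¹.mulVec ![starRingEnd ℂ x, 0, starRingEnd ℂ ξ]))
        = (((1 / (2 * (1 + ‖z‖ ^ 2) ^ n)) *
            (‖(Real.sqrt ((n : ℝ) ^ 2 - n) : ℂ) * (starRingEnd ℂ z) ^ 2 * x
                + (1 / (Real.sqrt ((n : ℝ) ^ 2 - n) : ℂ))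
                  * ((1 + ‖z‖ ^ 2 : ℝ) : ℂ) ^ 2 * ξ‖ ^ 2
              + 2 * ((n : ℝ) * ‖z‖ ^ 2 + 1) * ‖x‖ ^ 2) : ℝ) : ℂ) := by
  intro Δ
  have hzc : ((‖z‖ : ℂ)) ^ 2 = z * (starRingEnd ℂ z) := by
    rw [Complex.mul_conj]; norm_cast; exact Complex.sq_norm z
  have hzc4 : ((‖z‖ : ℂ)) ^ 4 = (z * (starRingEnd ℂ z)) ^ 2 := by
    rw [← hzc]; ring
  have hxc : ((‖x‖ : ℂ)) ^ 2 = x * (starRingEnd ℂ x) := by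
    rw [Complex.mul_conj]; norm_cast; exact Complex.sq_norm x
  have hw0 : (0:ℝ) < 1 + ‖z‖ ^ 2 := by positivity
  have hwE : (((1 + ‖z‖ ^ 2 : ℝ)) : ℂ) = (1 : ℂ) + (‖z‖ : ℂ) ^ 2 := by
    push_cast; ring
  have hw : ((1 : ℂ) + (‖z‖ : ℂ) ^ 2) ≠ 0 := by
    rw [← hwE]; exact_mod_cast hw0.ne'
  have hn0 : (n : ℂ) ≠ 0 := Nat.cast_ne_zero.mpr (by omega)
  have hn1 : (n : ℂ) - 1 ≠ 0 := by
    rw [sub_ne_zero]; exact_mod_cast (by omega : n ≠ 1)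
  have hd : (2*(n:ℂ)^2*((n:ℂ)-1)) ≠ 0 := by simp [hn0, hn1]
  have hw' : (1 : ℂ) + z * (starRingEnd ℂ z) ≠ 0 := by rw [← hzc]; exact hw
  have ha : (((1 + ‖z‖ ^ 2 : ℝ) : ℂ) ^ n) ≠ 0 := by
    apply pow_ne_zero; exact_mod_cast hw0.ne'
  -- the explicit inverse
  set B' : Matrix (Fin 3) (Fin 3) ℂ :=
      !![(2 * (n:ℂ)^2 * ((n:ℂ)-1) + 2 * (n:ℂ)^3 * ((n:ℂ)-1) * (z * starRingEnd ℂ z)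
            + (n:ℂ)^3 * ((n:ℂ)-1)^2 * (z * starRingEnd ℂ z)^2) / (2 * (n:ℂ)^2 * ((n:ℂ)-1)),
          ((1 : ℂ) + (‖z‖ : ℂ) ^ 2) *
            (-2 * (n:ℂ)^2 * ((n:ℂ)-1) * starRingEnd ℂ z
              - 2 * (n:ℂ)^2 * ((n:ℂ)-1)^2 * starRingEnd ℂ z * (z * starRingEnd ℂ z))
            / (2 * (n:ℂ)^2 * ((n:ℂ)-1)),
          ((1 : ℂ) + (‖z‖ : ℂ) ^ 2) ^ 2 * ((n:ℂ)^2 * ((n:ℂ)-1) * (starRingEnd ℂ z)^2)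
            / (2 * (n:ℂ)^2 * ((n:ℂ)-1));
          ((1 : ℂ) + (‖z‖ : ℂ) ^ 2) *
            (-2 * (n:ℂ)^2 * ((n:ℂ)-1) * z - 2 * (n:ℂ)^2 * ((n:ℂ)-1)^2 * z * (z * starRingEnd ℂ z))
            / (2 * (n:ℂ)^2 * ((n:ℂ)-1)),
          ((1 : ℂ) + (‖z‖ : ℂ) ^ 2) ^ 2 *
            (2 * (n:ℂ) * ((n:ℂ)-1) + 4 * (n:ℂ) * ((n:ℂ)-1)^2 * (z * starRingEnd ℂ z))
            / (2 * (n:ℂ)^2 * ((n:ℂ)-1)),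
          ((1 : ℂ) + (‖z‖ : ℂ) ^ 2) ^ 3 * (-2 * (n:ℂ) * ((n:ℂ)-1) * starRingEnd ℂ z)
            / (2 * (n:ℂ)^2 * ((n:ℂ)-1));
          ((1 : ℂ) + (‖z‖ : ℂ) ^ 2) ^ 2 * ((n:ℂ)^2 * ((n:ℂ)-1) * z^2)
            / (2 * (n:ℂ)^2 * ((n:ℂ)-1)),
          ((1 : ℂ) + (‖z‖ : ℂ) ^ 2) ^ 3 * (-2 * (n:ℂ) * ((n:ℂ)-1) * z)
            / (2 * (n:ℂ)^2 * ((n:ℂ)-1)),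
          ((1 : ℂ) + (‖z‖ : ℂ) ^ 2) ^ 4 * (n:ℂ) / (2 * (n:ℂ)^2 * ((n:ℂ)-1))] with hB'
  have hB : Δ * ((((1 + ‖z‖ ^ 2 : ℝ) : ℂ) ^ n)⁻¹ • B') = 1 := by
    show ((((1 + ‖z‖ ^ 2 : ℝ) : ℂ) ^ n) • _) * _ = 1
    rw [Matrix.smul_mul, Matrix.mul_smul, smul_smul, mul_inv_cancel₀ ha, one_smul]
    ext i j
    fin_cases i <;> fin_cases j <;>
      simp [hB', Matrix.mul_apply, Fin.sum_univ_three, Matrix.one_apply, Fin.mk_zero, Fin.mk_one,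
        hzc4, hzc] <;>
      field_simp [hd, hw'] <;>
      ring
  refine ⟨Matrix.isUnit_det_of_right_inverse hB, ?_⟩
  rw [Matrix.inv_eq_right_inv hB]
  -- compute the left-hand side
  have hLHS : dotProduct ![x, 0, ξ]
      (((((1 + ‖z‖ ^ 2 : ℝ) : ℂ) ^ n)⁻¹ • B').mulVec
        ![starRingEnd ℂ x, 0, starRingEnd ℂ ξ])
      = (((1 + ‖z‖ ^ 2 : ℝ) : ℂ) ^ n)⁻¹ *
        (x * (B' 0 0 * starRingEnd ℂ x + B' 0 2 * starRingEnd ℂ ξ)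
          + ξ * (B' 2 0 * starRingEnd ℂ x + B' 2 2 * starRingEnd ℂ ξ)) := by
    simp [Matrix.mulVec, dotProduct, Fin.sum_univ_three, Matrix.smul_apply, smul_eq_mul]
    ring
  rw [hLHS]
  -- handle the right-hand side
  have hnnR : (0:ℝ) < (n:ℝ)^2 - n := by
    have h2 : (2:ℝ) ≤ (n:ℝ) := by exact_mod_cast hn
    nlinarith
  set S : ℂ := ((Real.sqrt ((n : ℝ) ^ 2 - n) : ℝ) : ℂ) with hS
  have hS0 : S ≠ 0 := by
    rw [hS]
    exact_mod_cast (Real.sqrt_pos.mpr hnnR).ne'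
  have hS2 : S * S = (n:ℂ)^2 - (n:ℂ) := by
    rw [hS, ← Complex.ofReal_mul, Real.mul_self_sqrt hnnR.le]
    push_cast; ring
  have hnn0 : ((n:ℂ)^2 - (n:ℂ)) ≠ 0 := by rw [← hS2]; exact mul_ne_zero hS0 hS0
  set w : ℂ := (((1 + ‖z‖ ^ 2 : ℝ)) : ℂ) with hwdef
  set A : ℂ := S * (starRingEnd ℂ z) ^ 2 * x + (1 / S) * w ^ 2 * ξ with hA
  have hconjA : starRingEnd ℂ A = S * z ^ 2 * starRingEnd ℂ x
      + (1 / S) * w ^ 2 * starRingEnd ℂ ξ := by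
    rw [hA, hS, hwdef]
    simp [map_add, _root_.map_mul, map_pow, map_div₀, Complex.conj_ofReal]
  have hAfac : A = (((n:ℂ)^2 - (n:ℂ)) * (starRingEnd ℂ z) ^ 2 * x + w ^ 2 * ξ) / S := by
    rw [eq_div_iff hS0, hA]
    have hinv : S⁻¹ * S = 1 := inv_mul_cancel₀ hS0
    linear_combination (starRingEnd ℂ z) ^ 2 * x * hS2 + w ^ 2 * ξ * hinv
  have hcAfac : starRingEnd ℂ A
      = (((n:ℂ)^2 - (n:ℂ)) * z ^ 2 * starRingEnd ℂ x + w ^ 2 * starRingEnd ℂ ξ) / S := by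
    rw [eq_div_iff hS0, hconjA]
    have hinv : S⁻¹ * S = 1 := inv_mul_cancel₀ hS0
    linear_combination z ^ 2 * starRingEnd ℂ x * hS2 + w ^ 2 * starRingEnd ℂ ξ * hinv
  have habsA : ((‖A‖ ^ 2 : ℝ) : ℂ)
      = (((n:ℂ)^2 - (n:ℂ)) * (starRingEnd ℂ z) ^ 2 * x + w ^ 2 * ξ)
        * (((n:ℂ)^2 - (n:ℂ)) * z ^ 2 * starRingEnd ℂ x + w ^ 2 * starRingEnd ℂ ξ)
        / ((n:ℂ)^2 - (n:ℂ)) := by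
    have h1 : ((‖A‖ ^ 2 : ℝ) : ℂ) = A * starRingEnd ℂ A := by
      rw [Complex.mul_conj]; norm_cast; exact Complex.sq_norm A
    rw [h1, hcAfac, hAfac, div_mul_div_comm, hS2]
  -- put the RHS into complex form
  rw [Complex.ofReal_mul, Complex.ofReal_add, habsA]
  have h2R : ((2 * ((n : ℝ) * ‖z‖ ^ 2 + 1) * ‖x‖ ^ 2 : ℝ) : ℂ)
      = 2 * ((n:ℂ) * (z * starRingEnd ℂ z) + 1) * (x * starRingEnd ℂ x) := by
    push_cast
    rw [hzc, hxc]
  rw [h2R]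
  have h1R : ((1 / (2 * (1 + ‖z‖ ^ 2) ^ n) : ℝ) : ℂ)
      = 1 / (2 * ((1:ℂ) + z * starRingEnd ℂ z) ^ n) := by
    push_cast
    rw [hzc]
  rw [h1R]
  -- final algebraic identity
  have hwzc : w = (1:ℂ) + z * starRingEnd ℂ z := by rw [hwE, hzc]
  have hwn : ((1:ℂ) + z * starRingEnd ℂ z) ^ n ≠ 0 := pow_ne_zero _ hw'
  rw [hwzc, hB']
  simp only [Matrix.of_apply, Matrix.cons_val', Matrix.cons_val_zero, Matrix.cons_val_one,
    Matrix.head_cons, Matrix.empty_val', Matrix.cons_val_fin_one, Matrix.cons_val_two,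
    Matrix.tail_cons, Fin.isValue, Matrix.cons_val, Matrix.vecHead]
  rw [hzc]
  field_simp [hd, hw', hnn0, hwn]
  ring
end
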